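/- arXiv:1405.5310 — 5 statements merged into one kernel-verified Lean document; each statement's English description precedes it below -/
import Mathlib

section
/- Let p, q be coprime positive integers and f(X) = q·X^(p+q) − (p+q)·X^q + p over ℂ. Then every root of f other than 1 is a simple root of f. -/
open Polynomial

theorem stmt_1 (p q : ℕ) (hp : 1 ≤ p) (hq : 1 ≤ q) (hpq : Nat.Coprime p q)
    (z : ℂ)
    (hz : IsRoot (C (q : ℂ) * X ^ (p + q) - C ((p : ℂ) + q) * X ^ q + C (p : ℂ)) z)
    (hz1 : z ≠ 1) :
    rootMultiplicity z
      (C (q : ℂ) * X ^ (p + q) - C ((p : ℂ) + q) * X ^ q + C (p : ℂ)) = 1 := by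
  set f : ℂ[X] := C (q : ℂ) * X ^ (p + q) - C ((p : ℂ) + q) * X ^ q + C (p : ℂ) with hf
  have hp0 : (p : ℂ) ≠ 0 := Nat.cast_ne_zero.mpr (by omega)
  have hq0 : (q : ℂ) ≠ 0 := Nat.cast_ne_zero.mpr (by omega)
  have hev0 : eval 0 f = (p : ℂ) := by
    simp [hf, zero_pow (show p + q ≠ 0 by omega), zero_pow (show q ≠ 0 by omega)]
  have hfne : f ≠ 0 := by
    intro h
    rw [h] at hev0
    simp at hev0
    exact hp0 hev0.symm
  have hz0 : z ≠ 0 := by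
    intro h
    rw [h] at hz
    rw [IsRoot, hev0] at hz
    exact hp0 hz
  have heval : (q : ℂ) * z ^ (p + q) - ((p : ℂ) + q) * z ^ q + p = 0 := by
    simpa [IsRoot, hf] using hz
  have hmult1 : 1 ≤ rootMultiplicity z f :=
    (rootMultiplicity_pos hfne).mpr hz
  have hnot : ¬ (derivative f).IsRoot z := by
    intro hd
    have hd' : (q : ℂ) * ((p + q) * z ^ (p + q - 1)) - ((p : ℂ) + q) * (q * z ^ (q - 1)) = 0 := by
      simpa [IsRoot, hf, derivative_X_pow] using hd
    have key : z ^ (p + q - 1) = z ^ (q - 1) := by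
      have hc : ((p : ℂ) + q) * q ≠ 0 := by
        apply mul_ne_zero _ hq0
        intro h
        have : (p : ℂ) + q = ((p + q : ℕ) : ℂ) := by push_cast; ring
        rw [this] at h
        exact (Nat.cast_ne_zero.mpr (by omega : p + q ≠ 0)) h
      have : ((p : ℂ) + q) * q * (z ^ (p + q - 1) - z ^ (q - 1)) = 0 := by
        linear_combination hd'
      rcases mul_eq_zero.mp this with h | h
      · exact absurd h hc
      · exact sub_eq_zero.mp h
    have hzp : z ^ p = 1 := by
      have h1 : z ^ (p + q - 1) = z ^ p * z ^ (q - 1) := by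
        rw [← pow_add]; congr 1; omega
      rw [h1] at key
      have hzq1 : z ^ (q - 1) ≠ 0 := pow_ne_zero _ hz0
      field_simp at key
      exact key
    have hzq : z ^ q = 1 := by
      have h2 : z ^ (p + q) = z ^ q := by
        rw [pow_add, hzp, one_mul]
      rw [h2] at heval
      have : (p : ℂ) * (z ^ q - 1) = 0 := by linear_combination -heval
      rcases mul_eq_zero.mp this with h | h
      · exact absurd h hp0
      · exact sub_eq_zero.mp h
    -- z^p = 1, z^q = 1, gcd = 1 ⇒ z = 1
    have hco : IsCoprime (p : ℤ) (q : ℤ) := Int.isCoprime_iff_gcd_eq_one.mpr (by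
      simpa [Int.gcd] using hpq)
    obtain ⟨a, b, hab⟩ := hco
    have hzp' : z ^ ((p : ℕ) : ℤ) = 1 := by rw [zpow_natCast, hzp]
    have hzq' : z ^ ((q : ℕ) : ℤ) = 1 := by rw [zpow_natCast, hzq]
    have : z = 1 := by
      calc z = z ^ (1 : ℤ) := (zpow_one z).symm
      _ = z ^ (a * p + b * q) := by rw [hab]
      _ = (z ^ ((p : ℕ) : ℤ)) ^ a * (z ^ ((q : ℕ) : ℤ)) ^ b := by
          rw [zpow_add₀ hz0, mul_comm a, mul_comm b, zpow_mul, zpow_mul]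
      _ = 1 := by rw [hzp', hzq']; simp
    exact hz1 this
  have : ¬ 1 < rootMultiplicity z f := by
    rw [one_lt_rootMultiplicity_iff_isRoot hfne]
    exact fun h => hnot h.2
  omega
end

section
/- Let p, q be coprime positive integers and f(X) = q·X^(p+q) − (p+q)·X^q + p. Then f has no root of absolute value 1 other than X = 1. Equivalently, if z ∈ ℂ, |z| = 1 and f(z) = 0, then z = 1. -/
theorem stmt_2 (p q : ℕ) (hp : 1 ≤ p) (hq : 1 ≤ q) (hpq : Nat.Coprime p q)
    (z : ℂ) (hz : ‖z‖ = 1)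
    (hroot : (q : ℂ) * z ^ (p + q) - ((p : ℂ) + q) * z ^ q + p = 0) :
    z = 1 := by
  have habsq : ∀ n : ℕ, ‖z ^ n‖ = 1 := fun n => by
    rw [norm_pow, hz, one_pow]
  set w : ℂ := z ^ (p + q) with hw
  have heq : ((p : ℂ) + q) * z ^ q = (q : ℂ) * w + p := by linear_combination -hroot
  have h1 : ‖(q : ℂ) * w + p‖ = p + q := by
    rw [← heq, norm_mul, habsq, mul_one]
    have : ((p : ℂ) + q) = ((p + q : ℕ) : ℂ) := by push_cast; ring
    rw [this, Complex.norm_natCast]; push_cast; ring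
  have hns : Complex.normSq ((q : ℂ) * w + p) = ((p : ℝ) + q) ^ 2 := by
    rw [← Complex.sq_norm, h1]
  have hnw : w.re ^ 2 + w.im ^ 2 = 1 := by
    have := Complex.sq_norm w
    rw [habsq] at this
    rw [Complex.normSq_apply] at this
    nlinarith [this]
  have hre : ((q : ℂ) * w + p).re = q * w.re + p := by simp
  have him : ((q : ℂ) * w + p).im = q * w.im := by simp
  rw [Complex.normSq_apply, hre, him] at hns
  have hp' : (0 : ℝ) < p := by exact_mod_cast hp
  have hq' : (0 : ℝ) < q := by exact_mod_cast hq
  have h2 : 2 * (p : ℝ) * q * (w.re - 1) = 0 := by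
    linear_combination hns - (q : ℝ) ^ 2 * hnw
  have hwre : w.re = 1 := by
    have : (w.re - 1) = 0 := by
      have h3 : 2 * (p : ℝ) * q ≠ 0 := by positivity
      exact (mul_eq_zero.mp h2).resolve_left h3
    linarith
  have hwim : w.im = 0 := by nlinarith [hnw, hwre]
  have hw1 : w = 1 := by
    apply Complex.ext <;> simp [hwre, hwim]
  have hzq : z ^ q = 1 := by
    have hne : ((p : ℂ) + q) ≠ 0 := by
      have : ((p : ℂ) + q) = ((p + q : ℕ) : ℂ) := by push_cast; ring
      rw [this]; exact_mod_cast Nat.add_pos_left hp q |>.ne'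
    have : ((p : ℂ) + q) * z ^ q = ((p : ℂ) + q) * 1 := by
      rw [heq, hw1]; ring
    exact mul_left_cancel₀ hne this
  have hzp : z ^ p = 1 := by
    have : z ^ p * z ^ q = 1 := by rw [← pow_add]; exact hw1
    rwa [hzq, mul_one] at this
  have hdvd : orderOf z ∣ Nat.gcd p q :=
    Nat.dvd_gcd (orderOf_dvd_of_pow_eq_one hzp) (orderOf_dvd_of_pow_eq_one hzq)
  rw [hpq, Nat.dvd_one] at hdvd
  exact orderOf_eq_one_iff.mp hdvd
end

section
/- Let p, q ≥ 1 be coprime integers with p, q ≥ 2. Define ev_c : {0,…,p+q−1} → {0,…,q−1} × {0,…,p−1} by ev_c(k) = (ev_in(k) mod q, ev_out(k) mod p), where ev_in(k) = ⌈qk/(p+q) + 1/2⌉ and ev_out(k) = k − ev_in(k). Then ev_c is injective. -/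
theorem stmt_12 (p q : ℕ) (hp : 2 ≤ p) (hq : 2 ≤ q) (hpq : Nat.Coprime p q) :
    ∀ k₁ k₂ : ℤ, 0 ≤ k₁ → k₁ ≤ (p : ℤ) + q - 1 → 0 ≤ k₂ → k₂ ≤ (p : ℤ) + q - 1 →
      (⌈(q : ℚ) * k₁ / ((p : ℚ) + q) + 1 / 2⌉ % (q : ℤ) =
        ⌈(q : ℚ) * k₂ / ((p : ℚ) + q) + 1 / 2⌉ % (q : ℤ)) →
      ((k₁ - ⌈(q : ℚ) * k₁ / ((p : ℚ) + q) + 1 / 2⌉) % (p : ℤ) =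
        (k₂ - ⌈(q : ℚ) * k₂ / ((p : ℚ) + q) + 1 / 2⌉) % (p : ℤ)) →
      k₁ = k₂ := by
  intro k₁ k₂ h10 h11 h20 h21 hin hout
  set x₁ : ℚ := (q : ℚ) * k₁ / ((p : ℚ) + q) + 1 / 2 with hx1
  set x₂ : ℚ := (q : ℚ) * k₂ / ((p : ℚ) + q) + 1 / 2 with hx2
  set c₁ : ℤ := ⌈x₁⌉ with hc1
  set c₂ : ℤ := ⌈x₂⌉ with hc2
  have hn0 : (0:ℚ) < (p : ℚ) + q := by positivity
  -- divisibilities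
  have hq1 : (q:ℤ) ∣ (c₂ - c₁) := Int.ModEq.dvd hin
  have hp1 : (p:ℤ) ∣ ((k₂ - c₂) - (k₁ - c₁)) := Int.ModEq.dvd hout
  obtain ⟨a, ha⟩ := hq1
  obtain ⟨b, hb⟩ := hp1
  -- ceiling bounds in ℚ
  have l1 : x₁ ≤ (c₁ : ℚ) := Int.le_ceil x₁
  have l2 : (c₁ : ℚ) < x₁ + 1 := Int.ceil_lt_add_one x₁
  have l3 : x₂ ≤ (c₂ : ℚ) := Int.le_ceil x₂
  have l4 : (c₂ : ℚ) < x₂ + 1 := Int.ceil_lt_add_one x₂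
  -- key: |(c₂ - c₁) * n - q * (k₂ - k₁)| < n, as integers
  have h5 : x₂ - x₁ = (q:ℚ) * ((k₂:ℚ) - k₁) / ((p:ℚ) + q) := by
    rw [hx1, hx2]; ring
  have keyQ : |((c₂ : ℚ) - c₁) * ((p:ℚ) + q) - (q:ℚ) * ((k₂:ℚ) - k₁)| < (p:ℚ) + q := by
    rw [abs_lt]
    constructor
    · have h6 : (x₂ - x₁) - 1 < (c₂ : ℚ) - c₁ := by linarith
      rw [h5] at h6
      have h7 := mul_lt_mul_of_pos_right h6 hn0
      rw [sub_mul, div_mul_cancel₀ _ (ne_of_gt hn0)] at h7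
      linarith
    · have h6 : (c₂ : ℚ) - c₁ < (x₂ - x₁) + 1 := by linarith
      rw [h5] at h6
      have h7 := mul_lt_mul_of_pos_right h6 hn0
      rw [add_mul, div_mul_cancel₀ _ (ne_of_gt hn0)] at h7
      linarith
  have key : |(c₂ - c₁) * ((p:ℤ) + q) - (q:ℤ) * (k₂ - k₁)| < (p:ℤ) + q := by
    exact_mod_cast keyQ
  -- rewrite the expression using a, b
  have hd : k₂ - k₁ = (q:ℤ) * a + (p:ℤ) * b := by linarith [ha, hb]
  have hsub : (c₂ - c₁) * ((p:ℤ) + q) - (q:ℤ) * (k₂ - k₁) = (p:ℤ) * q * (a - b) := by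
    rw [ha, hd]; ring
  rw [hsub] at key
  -- pq > p + q
  have hpq' : (p:ℤ) + q < (p:ℤ) * q := by
    have hne : p ≠ q := by
      intro h; rw [h] at hpq; simp [Nat.Coprime, Nat.gcd_self] at hpq; omega
    have h3 : 3 ≤ p ∨ 3 ≤ q := by omega
    rcases h3 with h | h
    · have : (3:ℤ) ≤ p := by exact_mod_cast h
      have : (2:ℤ) ≤ q := by exact_mod_cast hq
      nlinarith
    · have : (3:ℤ) ≤ q := by exact_mod_cast h
      have : (2:ℤ) ≤ p := by exact_mod_cast hp
      nlinarith
  have hab : a = b := by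
    by_contra hne
    have h1 : (1:ℤ) ≤ |a - b| := Int.one_le_abs (by omega)
    have hpq0 : (0:ℤ) < (p:ℤ) * q := by positivity
    have : (p:ℤ) * q ≤ |(p:ℤ) * q * (a - b)| := by
      rw [abs_mul, abs_of_pos hpq0]
      have := mul_le_mul_of_nonneg_left h1 (le_of_lt hpq0)
      linarith
    linarith
  -- conclude
  subst hab
  have hd' : k₂ - k₁ = a * ((p:ℤ) + q) := by rw [hd]; ring
  by_contra hne
  have ha1 : (1:ℤ) ≤ |a| := Int.one_le_abs (by
    intro h; rw [h] at hd'; simp at hd'; omega)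
  have hn0' : (0:ℤ) < (p:ℤ) + q := by positivity
  have hbig : (p:ℤ) + q ≤ |k₂ - k₁| := by
    rw [hd', abs_mul, abs_of_pos hn0']
    have := mul_le_mul_of_nonneg_right ha1 (le_of_lt hn0')
    linarith
  have hsmall : |k₂ - k₁| ≤ (p:ℤ) + q - 1 := abs_le.mpr ⟨by omega, by omega⟩
  linarith
end

section
/- Let p > q ≥ 1 be coprime integers. For each n ∈ {0, …, p−1}, the fiber of the map k ↦ ev_out(k) mod p over n, restricted to k ∈ {0,…,p+q−1}, has at most 2 elements, where ev_out(k) = ⌊pk/(p+q) − 1/2⌋. -/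
theorem stmt_14 (p q : ℕ) (hq : 1 ≤ q) (hpq : q < p) (hcop : Nat.Coprime p q) :
    ∀ n : ℤ,
      ((Finset.Icc (0 : ℤ) ((p : ℤ) + q - 1)).filter
        (fun k : ℤ =>
          ⌊(p : ℚ) * (k : ℚ) / ((p : ℚ) + q) - 1 / 2⌋ % (p : ℤ) = n)).card ≤ 2 := by
  intro n
  set s := (Finset.Icc (0 : ℤ) ((p : ℤ) + q - 1)).filter
      (fun k : ℤ =>
        ⌊(p : ℚ) * (k : ℚ) / ((p : ℚ) + q) - 1 / 2⌋ % (p : ℤ) = n) with hs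
  have hp2 : 2 ≤ p := by omega
  have hpQ : (2:ℚ) ≤ (p:ℚ) := by exact_mod_cast hp2
  have hqQ : (1:ℚ) ≤ (q:ℚ) := by exact_mod_cast hq
  have hqp : (q:ℚ) < (p:ℚ) := by exact_mod_cast hpq
  have hden : (0:ℚ) < (p:ℚ) + (q:ℚ) := by linarith
  have key : ∀ a b : ℤ, a ∈ s → b ∈ s → a ≤ b → b ≤ a + 1 := by
    intro a b ha hb hab
    by_contra hcon
    push_neg at hcon
    simp only [hs, Finset.mem_filter, Finset.mem_Icc] at ha hb
    obtain ⟨⟨ha0, ha1⟩, hae⟩ := ha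
    obtain ⟨⟨hb0, hb1⟩, hbe⟩ := hb
    set xa : ℚ := (p : ℚ) * (a:ℚ) / ((p:ℚ) + q) - 1/2 with hxa
    set xb : ℚ := (p : ℚ) * (b:ℚ) / ((p:ℚ) + q) - 1/2 with hxb
    have ha0Q : (0:ℚ) ≤ (a:ℚ) := by exact_mod_cast ha0
    have hb1Q : (b:ℚ) ≤ (p:ℚ) + (q:ℚ) - 1 := by exact_mod_cast hb1
    have hbaQ : (2:ℚ) ≤ (b:ℚ) - (a:ℚ) := by
      have h : (2:ℤ) ≤ b - a := by omega
      exact_mod_cast h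
    -- f a < f b
    have hmono : ⌊xa⌋ < ⌊xb⌋ := by
      have hdiff : xb - xa = (p:ℚ) * ((b:ℚ) - (a:ℚ)) / ((p:ℚ) + q) := by
        rw [hxa, hxb]; ring
      have h1 : (1:ℚ) ≤ xb - xa := by
        rw [hdiff, le_div_iff₀ hden]
        nlinarith
      have hfl := Int.floor_le xa
      have h2 : ((⌊xa⌋ + 1 : ℤ) : ℚ) ≤ xb := by push_cast; linarith
      exact Int.le_floor.mpr h2
    -- f a ≥ -1
    have hfa : (-1:ℤ) ≤ ⌊xa⌋ := by
      apply Int.le_floor.mpr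
      have : (0:ℚ) ≤ (p:ℚ) * (a:ℚ) / ((p:ℚ) + q) := by positivity
      push_cast
      rw [hxa]
      linarith
    -- f b < p - 1
    have hfb : ⌊xb⌋ < (p:ℤ) - 1 := by
      apply Int.floor_lt.mpr
      have hmul : (p:ℚ) * (b:ℚ) ≤ (p:ℚ) * ((p:ℚ) + q - 1) := by nlinarith
      have : (p:ℚ) * (b:ℚ) / ((p:ℚ) + q) < (p:ℚ) - 1/2 := by
        rw [div_lt_iff₀ hden]
        nlinarith
      push_cast
      rw [hxb]
      linarith
    -- p divides the difference
    have hmod : ⌊xa⌋ % (p:ℤ) = ⌊xb⌋ % (p:ℤ) := by rw [hae, hbe]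
    have hdvd : ((p:ℕ):ℤ) ∣ ⌊xb⌋ - ⌊xa⌋ := Int.ModEq.dvd hmod
    obtain ⟨c, hc⟩ := hdvd
    have hpZ : (2:ℤ) ≤ (p:ℤ) := by exact_mod_cast hp2
    have hlt : ⌊xb⌋ - ⌊xa⌋ < (p:ℤ) := by omega
    have hpos : 0 < ⌊xb⌋ - ⌊xa⌋ := by omega
    rw [hc] at hlt hpos
    have hc1 : 1 ≤ c := by nlinarith
    nlinarith
  rcases Finset.eq_empty_or_nonempty s with he | hne
  · simp [he]
  · have hsub : s ⊆ Finset.Icc (s.min' hne) (s.min' hne + 1) := by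
      intro k hk
      rw [Finset.mem_Icc]
      exact ⟨Finset.min'_le s k hk, key _ _ (s.min'_mem hne) hk (Finset.min'_le s k hk)⟩
    calc s.card ≤ (Finset.Icc (s.min' hne) (s.min' hne + 1)).card :=
          Finset.card_le_card hsub
      _ ≤ 2 := by rw [Int.card_Icc]; omega
end

section
/- Let p, q ≥ 1 be coprime, and define on μ_{p+q} the relation ζ <_odd ζ' iff Re(e^{−εi}(ζ^p − ζ'^p)) < 0 for all sufficiently small ε > 0. Then <_odd is a strict total order on μ_{p+q}. -/
open Complex

/-- The "odd" order on roots of unity: `ζ <_odd ζ'` iff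
`Re(e^{-iε}(ζ^p - ζ'^p)) < 0` for all sufficiently small `ε > 0`. -/
def oddLt (p : ℕ) (ζ ζ' : ℂ) : Prop :=
  ∃ ε₀ > (0 : ℝ), ∀ ε : ℝ, 0 < ε → ε < ε₀ →
    (Complex.exp (-(ε : ℂ) * Complex.I) * (ζ ^ p - ζ' ^ p)).re < 0

lemma re_exp_aux (ε : ℝ) (w : ℂ) :
    (Complex.exp (-(ε : ℂ) * Complex.I) * w).re
      = Real.cos ε * w.re + Real.sin ε * w.im := by
  have h : -(ε : ℂ) * Complex.I = ((-ε : ℝ) : ℂ) * Complex.I := by push_cast; ring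
  rw [h, Complex.mul_re, Complex.exp_ofReal_mul_I_re, Complex.exp_ofReal_mul_I_im,
    Real.cos_neg, Real.sin_neg]
  ring

lemma neg_small (w : ℂ) (h : w.re < 0 ∨ (w.re = 0 ∧ w.im < 0)) :
    ∃ ε₀ > (0 : ℝ), ∀ ε : ℝ, 0 < ε → ε < ε₀ →
      (Complex.exp (-(ε : ℂ) * Complex.I) * w).re < 0 := by
  rcases h with h | ⟨h0, him⟩
  · -- continuity at 0
    have hc : Continuous fun ε : ℝ => (Complex.exp (-(ε : ℂ) * Complex.I) * w).re := by
      continuity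
    have h0 : (fun ε : ℝ => (Complex.exp (-(ε : ℂ) * Complex.I) * w).re) 0 < 0 := by
      simp [h]
    have hev : ∀ᶠ ε : ℝ in nhds 0,
        (Complex.exp (-(ε : ℂ) * Complex.I) * w).re < 0 :=
      (hc.continuousAt (x := 0)).eventually_lt_const h0
    rcases Metric.eventually_nhds_iff.mp hev with ⟨δ, hδ, hδ'⟩
    refine ⟨δ, hδ, fun ε hε hε' => ?_⟩
    exact hδ' (by simpa [Real.dist_eq, abs_of_pos hε] using hε')
  · refine ⟨Real.pi, Real.pi_pos, fun ε hε hε' => ?_⟩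
    rw [re_exp_aux, h0]
    have : Real.sin ε > 0 := Real.sin_pos_of_pos_of_lt_pi hε hε'
    nlinarith

lemma pow_inj_aux (p q : ℕ) (hp : 1 ≤ p) (hpq : Nat.Coprime p q) (ζ ζ' : ℂ)
    (h1 : ζ ^ (p + q) = 1) (h2 : ζ' ^ (p + q) = 1) (hpow : ζ ^ p = ζ' ^ p) :
    ζ = ζ' := by
  have hζ : ζ ≠ 0 := by
    intro h; rw [h, zero_pow (by omega : p + q ≠ 0)] at h1
    exact one_ne_zero h1.symm
  have hζ' : ζ' ≠ 0 := by
    intro h; rw [h, zero_pow (by omega : p + q ≠ 0)] at h2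
    exact one_ne_zero h2.symm
  have hco : Nat.Coprime p (p + q) := by
    simpa using (Nat.coprime_add_self_left (m := p) (n := q)).mpr hpq
  have hico : IsCoprime (p : ℤ) ((p + q : ℕ) : ℤ) := by
    rwa [Int.isCoprime_iff_gcd_eq_one, Int.gcd_natCast_natCast]
  obtain ⟨u, v, huv⟩ := hico
  have key : ∀ z : ℂ, z ≠ 0 → z ^ (p + q) = 1 → z ^ p = ζ ^ p → z = ζ := by
    intro z hz hz1 hzp
    have : z = (z ^ (p : ℤ)) ^ u * (z ^ ((p + q : ℕ) : ℤ)) ^ v := by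
      rw [← zpow_natCast z p, ← zpow_natCast z (p + q)] at *
      rw [← zpow_mul, ← zpow_mul, ← zpow_add₀ hz]
      rw [show (p : ℤ) * u + ((p + q : ℕ) : ℤ) * v = 1 by linarith [huv]]
      simp
    rw [this]
    have hzζ : ζ = (ζ ^ (p : ℤ)) ^ u * (ζ ^ ((p + q : ℕ) : ℤ)) ^ v := by
      rw [← zpow_mul, ← zpow_mul, ← zpow_add₀ hζ]
      rw [show (p : ℤ) * u + ((p + q : ℕ) : ℤ) * v = 1 by linarith [huv]]
      simp
    rw [zpow_natCast, zpow_natCast, hzp, hz1, h1] at *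
    exact hzζ.symm
  exact key ζ hζ h1 rfl ▸ (key ζ' hζ' h2 hpow.symm).symm ▸ rfl

theorem stmt_18 (p q : ℕ) (hp : 1 ≤ p) (hq : 1 ≤ q) (hpq : Nat.Coprime p q) :
    (∀ ζ : ℂ, ζ ^ (p + q) = 1 → ¬ oddLt p ζ ζ) ∧
    (∀ ζ ζ' ζ'' : ℂ, ζ ^ (p + q) = 1 → ζ' ^ (p + q) = 1 → ζ'' ^ (p + q) = 1 →
      oddLt p ζ ζ' → oddLt p ζ' ζ'' → oddLt p ζ ζ'') ∧
    (∀ ζ ζ' : ℂ, ζ ^ (p + q) = 1 → ζ' ^ (p + q) = 1 → ζ ≠ ζ' →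
      oddLt p ζ ζ' ∨ oddLt p ζ' ζ) := by
  refine ⟨?_, ?_, ?_⟩
  · rintro ζ _ ⟨ε₀, hε₀, h⟩
    have := h (ε₀ / 2) (by linarith) (by linarith)
    simp at this
  · rintro ζ ζ' ζ'' _ _ _ ⟨ε₁, hε₁, h1⟩ ⟨ε₂, hε₂, h2⟩
    refine ⟨min ε₁ ε₂, lt_min hε₁ hε₂, fun ε hε hε' => ?_⟩
    have hh1 := h1 ε hε (lt_of_lt_of_le hε' (min_le_left _ _))
    have hh2 := h2 ε hε (lt_of_lt_of_le hε' (min_le_right _ _))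
    have : Complex.exp (-(ε : ℂ) * Complex.I) * (ζ ^ p - ζ'' ^ p)
        = Complex.exp (-(ε : ℂ) * Complex.I) * (ζ ^ p - ζ' ^ p)
          + Complex.exp (-(ε : ℂ) * Complex.I) * (ζ' ^ p - ζ'' ^ p) := by ring
    rw [this, Complex.add_re]
    linarith
  · intro ζ ζ' h1 h2 hne
    have hw : ζ ^ p - ζ' ^ p ≠ 0 := by
      intro h
      exact hne (pow_inj_aux p q hp hpq ζ ζ' h1 h2 (by linear_combination h))
    set w := ζ ^ p - ζ' ^ p with hwdef
    have hw' : ζ' ^ p - ζ ^ p = -w := by rw [hwdef]; ring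
    rcases lt_trichotomy w.re 0 with h | h | h
    · exact Or.inl (neg_small w (Or.inl h))
    · rcases lt_trichotomy w.im 0 with h' | h' | h'
      · exact Or.inl (neg_small w (Or.inr ⟨h, h'⟩))
      · exact absurd (Complex.ext h h') hw
      · refine Or.inr ?_
        unfold oddLt
        rw [hw']
        exact neg_small (-w) (Or.inr ⟨by simp [h], by simp; linarith⟩)
    · refine Or.inr ?_
      unfold oddLt
      rw [hw']
      exact neg_small (-w) (Or.inl (by simp; linarith))
end
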